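/- In the standard monster chart with inverted positions IP ⊆ {1,...,k} and vector fields f_j defined recursively as above, for 1 ≤ i < j ≤ k: [f_i, f_j] = -b_{ij} f_{i-1} if i ∈ IP and [f_i, f_j] = -b_{ij} v_{i-1} if i ∉ IP, where b_{ij} = a_{i+1,j} if i+1 ∈ IP and b_{ij} = n_{i+1} a_{i+1,j} otherwise. -/

import Mathlib

/-- Polynomial functions on the standard chart `U × 𝔸^k`, with variable `0`
the coordinate `r₀` and variable `i+1` the coordinate `nᵢ`. -/
abbrev MPoly : Type := MvPolynomial ℕ ℚ

/-- A polynomial vector field, recorded by its (finitely many nonzero)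
components with respect to the basis `∂/∂r₀, ∂/∂n₀, ∂/∂n₁, …`. -/
abbrev VField : Type := ℕ →₀ MPoly

/-- The coordinate function `nᵢ`. -/
noncomputable def nvar (i : ℕ) : MPoly := MvPolynomial.X (i + 1)

/-- The Lie derivative `X(q)` of a function by a vector field. -/
noncomputable def vfApply (X : VField) (q : MPoly) : MPoly :=
  X.sum fun d p => p * MvPolynomial.pderiv d q

/-- The Lie bracket `[X,Y]` of two polynomial vector fields. -/
noncomputable def bracket (X Y : VField) : VField :=
  (X.sum fun d p => Y.sum fun c q => Finsupp.single c (p * MvPolynomial.pderiv d q)) -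
  (Y.sum fun d p => X.sum fun c q => Finsupp.single c (p * MvPolynomial.pderiv d q))

/-- The standard vertical vector field `vᵢ = ∂/∂nᵢ`. -/
noncomputable def vvf (i : ℕ) : VField := Finsupp.single (i + 1) 1

/-- The standard focal vector fields: `f₀ = ∂/∂r₀`, and
`fᵢ = nᵢ·fᵢ₋₁ + vᵢ₋₁` if `i ∈ IP` (inverted choice),
`fᵢ = fᵢ₋₁ + nᵢ·vᵢ₋₁` if `i ∉ IP` (ordinary choice). -/
noncomputable def fvf (IP : Finset ℕ) : ℕ → VField
  | 0 => Finsupp.single 0 1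
  | (i + 1) =>
      if i + 1 ∈ IP then nvar (i + 1) • fvf IP i + vvf i
      else fvf IP i + nvar (i + 1) • vvf i

/-- `a_{ij} = Π_{h ∈ IP, i+1 ≤ h ≤ j} n_h`. -/
noncomputable def apoly (IP : Finset ℕ) (i j : ℕ) : MPoly :=
  ∏ h ∈ (Finset.Icc (i + 1) j).filter (fun h => h ∈ IP), nvar h

/-- `b_{ij} = a_{i+1,j}` if `i+1 ∈ IP`, and `b_{ij} = n_{i+1}·a_{i+1,j}` otherwise. -/
noncomputable def bpoly (IP : Finset ℕ) (i j : ℕ) : MPoly :=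
  if i + 1 ∈ IP then apoly IP (i + 1) j else nvar (i + 1) * apoly IP (i + 1) j

open MvPolynomial Finsupp

lemma vfApply_X (X : VField) (m : ℕ) : vfApply X (MvPolynomial.X m) = X m := by
  unfold vfApply
  have : (X.sum fun d p => p * pderiv d (MvPolynomial.X m))
      = X.sum fun d p => if d = m then p else 0 := by
    apply Finsupp.sum_congr
    intro d _
    rw [pderiv_X]
    by_cases h : d = m <;> simp [h, Pi.single_apply]
  rw [this, Finsupp.sum_ite_eq' X m (fun _ p => p)]
  by_cases h : m ∈ X.support
  · simp [h]
  · simp [h, Finsupp.notMem_support_iff.mp h]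

lemma vfApply_nvar (X : VField) (i : ℕ) : vfApply X (nvar i) = X (i + 1) := vfApply_X X (i + 1)

lemma vfApply_one (X : VField) : vfApply X 1 = 0 := by
  unfold vfApply; simp

lemma vfApply_zero (X : VField) : vfApply X 0 = 0 := by
  unfold vfApply; simp

lemma vfApply_add (X : VField) (p q : MPoly) :
    vfApply X (p + q) = vfApply X p + vfApply X q := by
  unfold vfApply
  rw [← Finsupp.sum_add]
  apply Finsupp.sum_congr
  intro d _; rw [map_add, mul_add]

lemma vfApply_mul (X : VField) (p q : MPoly) :
    vfApply X (p * q) = p * vfApply X q + q * vfApply X p := by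
  unfold vfApply
  rw [Finsupp.mul_sum, Finsupp.mul_sum, ← Finsupp.sum_add]
  apply Finsupp.sum_congr
  intro d _; rw [pderiv_mul]; ring

lemma vfApply_smul_left (p : MPoly) (X : VField) (q : MPoly) :
    vfApply (p • X) q = p * vfApply X q := by
  unfold vfApply
  rw [Finsupp.sum_smul_index' (fun i => by simp), Finsupp.mul_sum]
  apply Finsupp.sum_congr
  intro d _; simp [smul_eq_mul]; ring

lemma vfApply_add_left (X Y : VField) (q : MPoly) :
    vfApply (X + Y) q = vfApply X q + vfApply Y q := by
  unfold vfApply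
  exact Finsupp.sum_add_index' (fun a => by simp) (fun a b c => add_mul b c _)

lemma bracket_apply (X Y : VField) (m : ℕ) :
    bracket X Y m = vfApply X (Y m) - vfApply Y (X m) := by
  have key : ∀ (Z W : VField), (Z.sum fun d p => (W.sum fun c q => Finsupp.single c (p * MvPolynomial.pderiv d q)) m)
      = vfApply Z (W m) := by
    intro Z W
    unfold vfApply
    apply Finsupp.sum_congr
    intro d _
    rw [Finsupp.sum_apply]
    have : (W.sum fun c q => (Finsupp.single c (Z d * pderiv d q)) m)
        = W.sum fun c q => if c = m then Z d * pderiv d q else 0 := by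
      apply Finsupp.sum_congr; intro c _; rw [Finsupp.single_apply]
    rw [this, Finsupp.sum_ite_eq']
    by_cases h : m ∈ W.support
    · simp [h]
    · simp [h, Finsupp.notMem_support_iff.mp h]
  unfold bracket
  rw [Finsupp.sub_apply, Finsupp.sum_apply, Finsupp.sum_apply, key X Y, key Y X]

lemma bracket_add_right (X Y Z : VField) :
    bracket X (Y + Z) = bracket X Y + bracket X Z := by
  ext m
  simp only [bracket_apply, Finsupp.add_apply, vfApply_add, vfApply_add_left]
  ring

lemma bracket_smul_right (p : MPoly) (X Y : VField) :
    bracket X (p • Y) = p • bracket X Y + vfApply X p • Y := by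
  ext m
  simp only [bracket_apply, Finsupp.add_apply, Finsupp.smul_apply, smul_eq_mul,
    vfApply_mul, vfApply_smul_left]
  ring

lemma bracket_add_left (X Y Z : VField) :
    bracket (X + Y) Z = bracket X Z + bracket Y Z := by
  ext m
  simp only [bracket_apply, Finsupp.add_apply, vfApply_add, vfApply_add_left]
  ring

lemma bracket_smul_left (p : MPoly) (X Y : VField) :
    bracket (p • X) Y = p • bracket X Y - vfApply Y p • X := by
  ext m
  simp only [bracket_apply, Finsupp.sub_apply, Finsupp.add_apply, Finsupp.smul_apply,
    smul_eq_mul, vfApply_mul, vfApply_smul_left]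
  ring

/-- components of `fvf IP m` vanish above index `m`. -/
lemma fvf_apply_gt (IP : Finset ℕ) (m c : ℕ) (h : m < c) : fvf IP m c = 0 := by
  induction m generalizing c with
  | zero =>
      simp [fvf, Finsupp.single_apply]; omega
  | succ n ih =>
      rw [fvf]
      split <;>
      · simp [Finsupp.add_apply, Finsupp.smul_apply, vvf, Finsupp.single_apply,
          ih c (by omega)]
        omega

/-- coefficients of `fvf IP m` only involve variables `2..m+1`. -/
lemma pderiv_fvf (IP : Finset ℕ) (m c d : ℕ) (h : d = 0 ∨ d = 1 ∨ m + 2 ≤ d) :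
    MvPolynomial.pderiv d (fvf IP m c) = 0 := by
  induction m generalizing c with
  | zero =>
      rw [fvf, Finsupp.single_apply]
      split <;> simp
  | succ n ih =>
      have hd : d ≠ n + 2 := by omega
      have ih' : pderiv d (fvf IP n c) = 0 := ih c (by omega)
      rw [fvf]
      have hn : pderiv d (nvar (n+1)) = 0 := by
        rw [nvar, pderiv_X, Pi.single_apply]
        exact if_neg (by omega)
      split <;>
      · simp only [Finsupp.add_apply, Finsupp.smul_apply, smul_eq_mul, map_add,
          pderiv_mul, ih', hn, vvf, Finsupp.single_apply]
        split <;> simp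

lemma vfApply_single (a : ℕ) (q : MPoly) :
    vfApply (Finsupp.single a 1) q = MvPolynomial.pderiv a q := by
  unfold vfApply
  rw [Finsupp.sum_single_index] <;> simp

lemma vfApply_single_apply (X : VField) (a c : ℕ) :
    vfApply X ((Finsupp.single a (1:MPoly)) c) = 0 := by
  rw [Finsupp.single_apply]
  split
  · exact vfApply_one X
  · exact vfApply_zero X

lemma bracket_single_fvf (a : ℕ) (IP : Finset ℕ) (m : ℕ)
    (h : ∀ c, MvPolynomial.pderiv a (fvf IP m c) = 0) :
    bracket (Finsupp.single a 1) (fvf IP m) = 0 := by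
  ext c
  rw [bracket_apply, vfApply_single, h, vfApply_single_apply]
  simp

lemma bracket_vvf_vvf (i j : ℕ) : bracket (vvf i) (vvf j) = 0 := by
  ext c
  rw [vvf, vvf, bracket_apply, vfApply_single_apply, vfApply_single_apply]
  simp

lemma vfApply_vvf_nvar (i m : ℕ) :
    vfApply (vvf i) (nvar m) = if i = m then 1 else 0 := by
  rw [vvf, vfApply_single, nvar, MvPolynomial.pderiv_X, Pi.single_apply]
  simp [eq_comm]

lemma apoly_self (IP : Finset ℕ) (i : ℕ) : apoly IP i i = 1 := by
  unfold apoly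
  rw [Finset.Icc_eq_empty (by omega)]
  simp

lemma apoly_succ_right (IP : Finset ℕ) (i j : ℕ) (h : i ≤ j) :
    apoly IP i (j + 1) = if j + 1 ∈ IP then apoly IP i j * nvar (j + 1) else apoly IP i j := by
  unfold apoly
  have hins : Finset.Icc (i + 1) (j + 1) = insert (j + 1) (Finset.Icc (i + 1) j) := by
    ext x; simp [Finset.mem_Icc, Finset.mem_insert]; omega
  rw [hins, Finset.filter_insert]
  split
  · rw [Finset.prod_insert (by simp [Finset.mem_Icc])]
    ring
  · rfl

lemma apoly_succ_left (IP : Finset ℕ) (i j : ℕ) (h : i + 1 ≤ j) :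
    apoly IP i j = if i + 1 ∈ IP then nvar (i + 1) * apoly IP (i + 1) j else apoly IP (i + 1) j := by
  unfold apoly
  have hins : Finset.Icc (i + 1) j = insert (i + 1) (Finset.Icc (i + 2) j) := by
    ext x; simp [Finset.mem_Icc, Finset.mem_insert]; omega
  rw [hins, Finset.filter_insert]
  split
  · rw [Finset.prod_insert (by simp [Finset.mem_Icc])]
  · rfl

lemma bpoly_succ_right (IP : Finset ℕ) (i n : ℕ) (h : i < n) :
    bpoly IP i (n + 1) = if n + 1 ∈ IP then bpoly IP i n * nvar (n + 1) else bpoly IP i n := by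
  unfold bpoly
  rw [apoly_succ_right IP (i + 1) n (by omega)]
  split <;> split <;> ring

/-- Component formula: for `i < j`, the `v_i`-component of `f_j` is `b_{ij}`. -/
lemma fvf_apply_lt (IP : Finset ℕ) (i j : ℕ) (hij : i < j) :
    fvf IP j (i + 1) = bpoly IP i j := by
  induction j with
  | zero => omega
  | succ n ih =>
      rcases Nat.lt_or_ge i n with hin | hin
      · -- i < n : recursion step
        rw [fvf, bpoly_succ_right IP i n hin]
        have hv : vvf n (i + 1) = 0 := by
          rw [vvf, Finsupp.single_apply, if_neg (by omega)]
        split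
        · rw [Finsupp.add_apply, Finsupp.smul_apply, smul_eq_mul, ih hin, hv, add_zero]
          ring
        · rw [Finsupp.add_apply, Finsupp.smul_apply, smul_eq_mul, ih hin, hv, mul_zero, add_zero]
      · -- i = n : base case
        have : i = n := by omega
        subst this
        rw [fvf]
        have hf : fvf IP i (i + 1) = 0 := fvf_apply_gt IP i (i + 1) (by omega)
        have hv : vvf i (i + 1) = 1 := by rw [vvf, Finsupp.single_apply, if_pos rfl]
        unfold bpoly
        rw [apoly_self]
        split
        · rw [Finsupp.add_apply, Finsupp.smul_apply, smul_eq_mul, hf, hv, mul_zero, zero_add]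
        · rw [Finsupp.add_apply, Finsupp.smul_apply, smul_eq_mul, hf, hv, mul_one, zero_add]

/-- `[v_i, f_j] = a_{ij}·f_{i-1}` if `i ∈ IP`, `a_{ij}·v_{i-1}` otherwise, for `1 ≤ i ≤ j`. -/
lemma bracket_vvf_fvf (IP : Finset ℕ) (i j : ℕ) (h1 : 1 ≤ i) (h2 : i ≤ j) :
    bracket (vvf i) (fvf IP j) =
      if i ∈ IP then apoly IP i j • fvf IP (i - 1) else apoly IP i j • vvf (i - 1) := by
  induction j with
  | zero => omega
  | succ n ih =>
      rcases Nat.lt_or_ge n i with hin | hin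
      · -- base: i = n + 1
        have hi : i = n + 1 := by omega
        subst hi
        rw [fvf]
        have hz : bracket (vvf (n + 1)) (fvf IP n) = 0 := by
          rw [vvf]
          exact bracket_single_fvf _ IP n (fun c => pderiv_fvf IP n c _ (by omega))
        have hnv : vfApply (vvf (n + 1)) (nvar (n + 1)) = 1 := by
          rw [vfApply_vvf_nvar, if_pos rfl]
        rw [apoly_self]
        split
        · rw [bracket_add_right, bracket_smul_right, hz, bracket_vvf_vvf, hnv]
          simp
        · rw [bracket_add_right, bracket_smul_right, hz, bracket_vvf_vvf, hnv]
          simp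
      · -- step: i ≤ n
        have ih' := ih hin
        rw [fvf, apoly_succ_right IP i n (by omega)]
        have hnv : vfApply (vvf i) (nvar (n + 1)) = 0 := by
          rw [vfApply_vvf_nvar, if_neg (by omega)]
        split
        · rw [bracket_add_right, bracket_smul_right, ih', bracket_vvf_vvf, hnv]
          split <;> simp [smul_smul, mul_comm]
        · rw [bracket_add_right, bracket_smul_right, ih', bracket_vvf_vvf, hnv]
          split <;> simp [smul_smul, mul_comm]

lemma bracket_f0_fvf (IP : Finset ℕ) (j : ℕ) :
    bracket (Finsupp.single 0 1) (fvf IP j) = 0 :=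
  bracket_single_fvf 0 IP j (fun c => pderiv_fvf IP j c 0 (by omega))

lemma bracket_v0_fvf (IP : Finset ℕ) (j : ℕ) :
    bracket (vvf 0) (fvf IP j) = 0 := by
  rw [vvf]
  exact bracket_single_fvf 1 IP j (fun c => pderiv_fvf IP j c 1 (by omega))

lemma mainAux (IP : Finset ℕ) (m j : ℕ) (hij : m + 1 < j)
    (hC : if m + 1 ∈ IP
      then nvar (m + 1) • bracket (fvf IP m) (fvf IP j) + bracket (vvf m) (fvf IP j) = 0
      else bracket (fvf IP m) (fvf IP j) + nvar (m + 1) • bracket (vvf m) (fvf IP j) = 0) :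
    bracket (fvf IP (m + 1)) (fvf IP j) =
      if m + 1 ∈ IP then (-bpoly IP (m + 1) j) • fvf IP m
      else (-bpoly IP (m + 1) j) • vvf m := by
  have hv : vfApply (fvf IP j) (nvar (m + 1)) = bpoly IP (m + 1) j := by
    rw [vfApply_nvar]
    exact fvf_apply_lt IP (m + 1) j hij
  rw [fvf]
  by_cases h : m + 1 ∈ IP
  · rw [if_pos h] at hC ⊢
    rw [if_pos h, bracket_add_left, bracket_smul_left, hv]
    have : nvar (m + 1) • bracket (fvf IP m) (fvf IP j) - bpoly IP (m + 1) j • fvf IP m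
        + bracket (vvf m) (fvf IP j)
        = (nvar (m + 1) • bracket (fvf IP m) (fvf IP j) + bracket (vvf m) (fvf IP j))
          - bpoly IP (m + 1) j • fvf IP m := by abel
    rw [this, hC, zero_sub, ← neg_smul]
  · rw [if_neg h] at hC ⊢
    rw [if_neg h, bracket_add_left, bracket_smul_left, hv]
    have : bracket (fvf IP m) (fvf IP j)
        + (nvar (m + 1) • bracket (vvf m) (fvf IP j) - bpoly IP (m + 1) j • vvf m)
        = (bracket (fvf IP m) (fvf IP j) + nvar (m + 1) • bracket (vvf m) (fvf IP j))
          - bpoly IP (m + 1) j • vvf m := by abel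
    rw [this, hC, zero_sub, ← neg_smul]

lemma auxC (IP : Finset ℕ) : ∀ i j : ℕ, i < j →
    (if i + 1 ∈ IP
      then nvar (i + 1) • bracket (fvf IP i) (fvf IP j) + bracket (vvf i) (fvf IP j) = 0
      else bracket (fvf IP i) (fvf IP j) + nvar (i + 1) • bracket (vvf i) (fvf IP j) = 0) := by
  intro i
  induction i with
  | zero =>
      intro j hj
      rw [show fvf IP 0 = Finsupp.single 0 1 from rfl, bracket_f0_fvf, bracket_v0_fvf]
      split <;> simp
  | succ n ih =>
      intro j hj
      have hmain := mainAux IP n j hj (ih j (by omega))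
      have hA := bracket_vvf_fvf IP (n + 1) j (by omega) (by omega)
      rw [hmain, hA]
      by_cases h2 : n + 2 ∈ IP
      · rw [if_pos (show n + 1 + 1 ∈ IP from h2)]
        have hb : nvar (n + 2) * bpoly IP (n + 1) j = apoly IP (n + 1) j := by
          rw [bpoly, if_pos (show n + 1 + 1 ∈ IP from h2),
            apoly_succ_left IP (n + 1) j (by omega), if_pos (show n + 1 + 1 ∈ IP from h2)]
        by_cases h1 : n + 1 ∈ IP
        · rw [if_pos h1, if_pos h1, smul_smul, Nat.add_sub_cancel, ← add_smul,
            show nvar (n + 1 + 1) * -bpoly IP (n + 1) j + apoly IP (n + 1) j = 0 by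
              rw [← hb]; ring, zero_smul]
        · rw [if_neg h1, if_neg h1, smul_smul, Nat.add_sub_cancel, ← add_smul,
            show nvar (n + 1 + 1) * -bpoly IP (n + 1) j + apoly IP (n + 1) j = 0 by
              rw [← hb]; ring, zero_smul]
      · rw [if_neg (show n + 1 + 1 ∉ IP from h2)]
        have hb : bpoly IP (n + 1) j = nvar (n + 2) * apoly IP (n + 1) j := by
          rw [bpoly, if_neg (show n + 1 + 1 ∉ IP from h2),
            apoly_succ_left IP (n + 1) j (by omega), if_neg (show n + 1 + 1 ∉ IP from h2)]
        by_cases h1 : n + 1 ∈ IP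
        · rw [if_pos h1, if_pos h1, smul_smul, Nat.add_sub_cancel, ← add_smul,
            show -bpoly IP (n + 1) j + nvar (n + 1 + 1) * apoly IP (n + 1) j = 0 by
              rw [hb]; ring, zero_smul]
        · rw [if_neg h1, if_neg h1, smul_smul, Nat.add_sub_cancel, ← add_smul,
            show -bpoly IP (n + 1) j + nvar (n + 1 + 1) * apoly IP (n + 1) j = 0 by
              rw [hb]; ring, zero_smul]


/-- for `1 ≤ i < j ≤ k`:
`[fᵢ, f_j] = -b_{ij}·fᵢ₋₁` if `i ∈ IP` and `[fᵢ, f_j] = -b_{ij}·vᵢ₋₁` if `i ∉ IP`. -/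
theorem bracket_fvf_fvf (k : ℕ) (IP : Finset ℕ) (hIP : IP ⊆ Finset.Icc 1 k)
    (i j : ℕ) (hi1 : 1 ≤ i) (hij : i < j) (hjk : j ≤ k) :
    bracket (fvf IP i) (fvf IP j) =
      if i ∈ IP then (-bpoly IP i j) • fvf IP (i - 1)
      else (-bpoly IP i j) • vvf (i - 1) := by
  obtain ⟨m, rfl⟩ : ∃ m, i = m + 1 := ⟨i - 1, by omega⟩
  simpa using mainAux IP m j hij (auxC IP m j (by omega))
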